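/- arXiv:2512.04249 — 4 statements merged into one kernel-verified Lean document; each statement's English description precedes it below -/
import Mathlib

section
/- Let A : ℝ → ℝ^{3×3} be continuous and let e₁, e₂ : ℝ → ℝ³ be solutions of ξ' = A(τ)ξ that are linearly independent for every τ. If n : ℝ → ℝ³ is differentiable with n(τ)ᵀ e₁(τ) = 0, n(τ)ᵀ e₂(τ) = 0, and ‖n(τ)‖ = 1 for all τ, then n satisfies the ODE n'(τ) = −(I − n(τ) n(τ)ᵀ) A(τ)ᵀ n(τ). -/
open Matrix

private lemma dot_hasDerivAt (f g : ℝ → Fin 3 → ℝ) (f' g' : Fin 3 → ℝ) (τ : ℝ)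
    (hf : HasDerivAt f f' τ) (hg : HasDerivAt g g' τ) :
    HasDerivAt (fun t => f t ⬝ᵥ g t) (f' ⬝ᵥ g τ + f τ ⬝ᵥ g') τ := by
  simp only [dotProduct, ← Finset.sum_add_distrib]
  exact HasDerivAt.fun_sum fun i _ => (hasDerivAt_pi.mp hf i).mul (hasDerivAt_pi.mp hg i)

private lemma vecMulVec_mulVec' (v w x : Fin 3 → ℝ) : vecMulVec v w *ᵥ x = (w ⬝ᵥ x) • v := by
  ext i
  simp only [vecMulVec_apply, mulVec, dotProduct, Pi.smul_apply, smul_eq_mul, Finset.sum_mul]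
  exact Finset.sum_congr rfl fun j _ => by ring

theorem stmt_4 (A : ℝ → Matrix (Fin 3) (Fin 3) ℝ) (hAcont : Continuous A)
    (e₁ e₂ : ℝ → (Fin 3 → ℝ))
    (he₁ : ∀ τ, HasDerivAt e₁ ((A τ).mulVec (e₁ τ)) τ)
    (he₂ : ∀ τ, HasDerivAt e₂ ((A τ).mulVec (e₂ τ)) τ)
    (hindep : ∀ τ, LinearIndependent ℝ ![e₁ τ, e₂ τ])
    (n n' : ℝ → (Fin 3 → ℝ))
    (hn : ∀ τ, HasDerivAt n (n' τ) τ)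
    (horth₁ : ∀ τ, (n τ) ⬝ᵥ (e₁ τ) = 0)
    (horth₂ : ∀ τ, (n τ) ⬝ᵥ (e₂ τ) = 0)
    (hunit : ∀ τ, (n τ) ⬝ᵥ (n τ) = 1) :
    ∀ τ, n' τ = -(((1 : Matrix (Fin 3) (Fin 3) ℝ) - vecMulVec (n τ) (n τ)).mulVec
                    ((A τ)ᵀ.mulVec (n τ))) := by
  intro τ
  set w : Fin 3 → ℝ :=
    -(((1 : Matrix (Fin 3) (Fin 3) ℝ) - vecMulVec (n τ) (n τ)).mulVec
        ((A τ)ᵀ.mulVec (n τ))) with hw_def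
  have hw : w = (n τ ⬝ᵥ ((A τ)ᵀ *ᵥ n τ)) • n τ - (A τ)ᵀ *ᵥ n τ := by
    rw [hw_def, sub_mulVec, one_mulVec, vecMulVec_mulVec', neg_sub]
  -- derivative facts
  have h1 : n' τ ⬝ᵥ e₁ τ + n τ ⬝ᵥ (A τ *ᵥ e₁ τ) = 0 := by
    have hd := dot_hasDerivAt n e₁ (n' τ) (A τ *ᵥ e₁ τ) τ (hn τ) (he₁ τ)
    have hc : (fun t => n t ⬝ᵥ e₁ t) = fun _ => (0 : ℝ) := funext horth₁
    have h0 : HasDerivAt (fun t => n t ⬝ᵥ e₁ t) 0 τ := hc ▸ hasDerivAt_const τ 0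
    exact hd.unique h0
  have h2 : n' τ ⬝ᵥ e₂ τ + n τ ⬝ᵥ (A τ *ᵥ e₂ τ) = 0 := by
    have hd := dot_hasDerivAt n e₂ (n' τ) (A τ *ᵥ e₂ τ) τ (hn τ) (he₂ τ)
    have hc : (fun t => n t ⬝ᵥ e₂ t) = fun _ => (0 : ℝ) := funext horth₂
    have h0 : HasDerivAt (fun t => n t ⬝ᵥ e₂ t) 0 τ := hc ▸ hasDerivAt_const τ 0
    exact hd.unique h0
  have h3 : n' τ ⬝ᵥ n τ = 0 := by
    have hd := dot_hasDerivAt n n (n' τ) (n' τ) τ (hn τ) (hn τ)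
    have hc : (fun t => n t ⬝ᵥ n t) = fun _ => (1 : ℝ) := funext hunit
    have h0 : HasDerivAt (fun t => n t ⬝ᵥ n t) 0 τ := hc ▸ hasDerivAt_const τ 1
    have := hd.unique h0
    rw [dotProduct_comm (n τ) (n' τ)] at this
    linarith
  -- rewrite the A-terms
  have hA₁ : n τ ⬝ᵥ (A τ *ᵥ e₁ τ) = ((A τ)ᵀ *ᵥ n τ) ⬝ᵥ e₁ τ := by
    rw [dotProduct_mulVec, mulVec_transpose]
  have hA₂ : n τ ⬝ᵥ (A τ *ᵥ e₂ τ) = ((A τ)ᵀ *ᵥ n τ) ⬝ᵥ e₂ τ := by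
    rw [dotProduct_mulVec, mulVec_transpose]
  set v : Fin 3 → ℝ := n' τ - w with hv_def
  have hve₁ : v ⬝ᵥ e₁ τ = 0 := by
    rw [hv_def, hw, sub_dotProduct, sub_dotProduct, smul_dotProduct, horth₁]
    rw [hA₁] at h1
    simp only [smul_zero, zero_sub, sub_neg_eq_add]
    linarith
  have hve₂ : v ⬝ᵥ e₂ τ = 0 := by
    rw [hv_def, hw, sub_dotProduct, sub_dotProduct, smul_dotProduct, horth₂]
    rw [hA₂] at h2
    simp only [smul_zero, zero_sub, sub_neg_eq_add]
    linarith
  have hvn : v ⬝ᵥ n τ = 0 := by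
    rw [hv_def, hw, sub_dotProduct, sub_dotProduct, smul_dotProduct, hunit,
      dotProduct_comm ((A τ)ᵀ *ᵥ n τ) (n τ)]
    rw [h3]
    simp [smul_eq_mul]
  -- the three vectors form a basis
  have hnspan : n τ ∉ Submodule.span ℝ (Set.range ![e₁ τ, e₂ τ]) := by
    intro hmem
    rw [Submodule.mem_span_range_iff_exists_fun] at hmem
    obtain ⟨c, hc⟩ := hmem
    have h4 : n τ ⬝ᵥ (∑ i, c i • ![e₁ τ, e₂ τ] i) = n τ ⬝ᵥ n τ := by rw [hc]
    rw [Fin.sum_univ_two, hunit τ] at h4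
    simp only [Matrix.cons_val_zero, Matrix.cons_val_one, Matrix.head_cons,
      dotProduct_add, dotProduct_smul, horth₁ τ, horth₂ τ, smul_zero, add_zero] at h4
    exact one_ne_zero h4.symm
  have hli : LinearIndependent ℝ ![n τ, e₁ τ, e₂ τ] := by
    rw [show (![n τ, e₁ τ, e₂ τ] : Fin 3 → Fin 3 → ℝ) = Fin.cons (n τ) ![e₁ τ, e₂ τ] from rfl,
      linearIndependent_fin_cons]
    exact ⟨hindep τ, hnspan⟩
  have hcard : Fintype.card (Fin 3) = Module.finrank ℝ (Fin 3 → ℝ) := by simp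
  let B := basisOfLinearIndependentOfCardEqFinrank hli hcard
  have hB : ∀ i, v ⬝ᵥ B i = 0 := by
    intro i
    have : B i = ![n τ, e₁ τ, e₂ τ] i := by
      rw [coe_basisOfLinearIndependentOfCardEqFinrank]
    rw [this]
    fin_cases i
    · exact hvn
    · exact hve₁
    · exact hve₂
  have hvv : v ⬝ᵥ v = 0 := by
    nth_rewrite 2 [← B.sum_repr v]
    rw [Fin.sum_univ_three, dotProduct_add, dotProduct_add, dotProduct_smul,
      dotProduct_smul, dotProduct_smul, hB 0, hB 1, hB 2]
    simp
  have hv0 : v = 0 := dotProduct_self_eq_zero.mp hvv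
  have := sub_eq_zero.mp hv0
  rw [this]
end

section
/- Let A : ℝ → ℝ^{3×3}, n : ℝ → ℝ³ (unit, differentiable, satisfying n' = −(I − n nᵀ)Aᵀ n), B : ℝ → ℝ³ continuous, and w : ℝ → ℝ. If ξ : ℝ → ℝ³ satisfies ξ' = A(τ)ξ + B(τ)w(τ), then s(τ) := n(τ)ᵀ ξ(τ) satisfies s'(τ) = (n(τ)ᵀ A(τ) n(τ)) s(τ) + (n(τ)ᵀ B(τ)) w(τ). -/
open Matrix

theorem stmt_6 (A : ℝ → Matrix (Fin 3) (Fin 3) ℝ)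
    (B : ℝ → (Fin 3 → ℝ)) (hBcont : Continuous B)
    (w : ℝ → ℝ)
    (n : ℝ → (Fin 3 → ℝ))
    (hn : ∀ τ, HasDerivAt n
        (-(((1 : Matrix (Fin 3) (Fin 3) ℝ) - vecMulVec (n τ) (n τ)).mulVec
            ((A τ)ᵀ.mulVec (n τ)))) τ)
    (hunit : ∀ τ, (n τ) ⬝ᵥ (n τ) = 1)
    (ξ : ℝ → (Fin 3 → ℝ))
    (hξ : ∀ τ, HasDerivAt ξ ((A τ).mulVec (ξ τ) + w τ • B τ) τ) :
    ∀ τ, HasDerivAt (fun τ => (n τ) ⬝ᵥ (ξ τ))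
      (((n τ) ⬝ᵥ ((A τ).mulVec (n τ))) * ((n τ) ⬝ᵥ (ξ τ))
        + ((n τ) ⬝ᵥ (B τ)) * w τ) τ := by
  intro τ
  set n' := (-(((1 : Matrix (Fin 3) (Fin 3) ℝ) - vecMulVec (n τ) (n τ)).mulVec
      ((A τ)ᵀ.mulVec (n τ)))) with hn'def
  set ξ' := ((A τ).mulVec (ξ τ) + w τ • B τ) with hξ'def
  have hni : ∀ i, HasDerivAt (fun t => n t i) (n' i) τ := fun i =>
    (hasDerivAt_pi.mp (hn τ)) i
  have hξi : ∀ i, HasDerivAt (fun t => ξ t i) (ξ' i) τ := fun i =>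
    (hasDerivAt_pi.mp (hξ τ)) i
  have hsum : HasDerivAt (fun t => (n t) ⬝ᵥ (ξ t))
      (∑ i, (n' i * ξ τ i + n τ i * ξ' i)) τ := by
    simp only [dotProduct]
    exact HasDerivAt.fun_sum (fun i _ => (hni i).mul (hξi i))
  convert hsum using 1
  have h1 : ∑ i, (n' i * ξ τ i + n τ i * ξ' i) = n' ⬝ᵥ ξ τ + n τ ⬝ᵥ ξ' := by
    simp [dotProduct, Finset.sum_add_distrib]
  rw [h1, hn'def, hξ'def]
  have h2 : ((1 : Matrix (Fin 3) (Fin 3) ℝ) - vecMulVec (n τ) (n τ)).mulVec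
      ((A τ)ᵀ.mulVec (n τ)) =
      (A τ)ᵀ.mulVec (n τ) - ((n τ) ⬝ᵥ ((A τ)ᵀ.mulVec (n τ))) • n τ := by
    rw [Matrix.sub_mulVec, Matrix.one_mulVec]
    congr 1
    ext i
    simp [vecMulVec, Matrix.mulVec, dotProduct, Finset.mul_sum, mul_comm, mul_left_comm]
  rw [h2]
  have h3 : (n τ) ⬝ᵥ ((A τ)ᵀ.mulVec (n τ)) = (n τ) ⬝ᵥ ((A τ).mulVec (n τ)) := by
    rw [Matrix.dotProduct_mulVec, Matrix.vecMul_transpose, dotProduct_comm]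
  rw [h3]
  have h4 : ((A τ)ᵀ.mulVec (n τ)) ⬝ᵥ (ξ τ) = (n τ) ⬝ᵥ ((A τ).mulVec (ξ τ)) := by
    rw [Matrix.dotProduct_mulVec, Matrix.mulVec_transpose]
  simp only [neg_dotProduct, sub_dotProduct, smul_dotProduct,
    dotProduct_add, dotProduct_smul, h4, smul_eq_mul]
  ring
end

section
/- Consider the scalar ODE s' = p(τ) s − k₁ q(τ) sign(s), where p, q : ℝ → ℝ are continuous and T-periodic, q ≥ 0 with ∫₀ᵀ q > 0, k₁ > 0, and ∫₀ᵀ (k₂ q − p̃) > 0 where the drift satisfies p(τ) = p̃(τ) − k₂ q(τ) with appropriate k₂. Then every Filippov solution with s(τ₀) = s₀ reaches s = 0 in finite time and remains at 0 thereafter. -/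
open Set intervalIntegral

/-- Derivative of `t ↦ s t * exp (-P t)` at a point where `s` is positive. -/
private lemma aux_hasDerivAt_g {p q : ℝ → ℝ} {k₁ : ℝ} {s P : ℝ → ℝ} {τ : ℝ}
    (hP : HasDerivAt P (p τ) τ)
    (hs : HasDerivAt s (p τ * s τ - k₁ * q τ * Real.sign (s τ)) τ)
    (hpos : 0 < s τ) :
    HasDerivAt (fun t => s t * Real.exp (-P t))
      (-(k₁ * q τ * Real.exp (-P τ))) τ := by
  have h := hs.mul (hP.neg.exp)
  refine h.congr_deriv ?_
  rw [Real.sign_of_pos hpos, Pi.neg_apply]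
  ring

/-- Integral identity for `g = s * exp(-P)` on an interval where `s > 0`. -/
private lemma aux_gdiff {p q : ℝ → ℝ} {k₁ : ℝ} {s : ℝ → ℝ}
    (hq : Continuous q) {P : ℝ → ℝ}
    (hP : ∀ τ, HasDerivAt P (p τ) τ)
    (hode : ∀ τ, s τ ≠ 0 →
      HasDerivAt s (p τ * s τ - k₁ * q τ * Real.sign (s τ)) τ)
    {a b : ℝ} (hab : a ≤ b) (hpos : ∀ τ ∈ Icc a b, 0 < s τ) :
    s b * Real.exp (-P b) - s a * Real.exp (-P a)
      = -(k₁ * ∫ τ in a..b, q τ * Real.exp (-P τ)) := by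
  have hPc : Continuous P :=
    continuous_iff_continuousAt.2 fun x => (hP x).differentiableAt.continuousAt
  have key : (∫ τ in a..b, -(k₁ * q τ * Real.exp (-P τ)))
      = s b * Real.exp (-P b) - s a * Real.exp (-P a) := by
    apply intervalIntegral.integral_eq_sub_of_hasDerivAt
    · intro x hx
      rw [uIcc_of_le hab] at hx
      exact aux_hasDerivAt_g (hP x) (hode x (hpos x hx).ne') (hpos x hx)
    · exact Continuous.intervalIntegrable (by fun_prop) a b
  rw [← key]
  simp only [mul_assoc]
  rw [intervalIntegral.integral_neg, intervalIntegral.integral_const_mul]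

/-- Once a solution hits `0`, it can never become positive later. -/
private lemma aux_stay {p q : ℝ → ℝ} {k₁ : ℝ} {s : ℝ → ℝ}
    (hpc : Continuous p) (hq : Continuous q)
    (hqnonneg : ∀ τ, 0 ≤ q τ) (hk₁ : 0 < k₁) (hscont : Continuous s)
    (hode : ∀ τ, s τ ≠ 0 →
      HasDerivAt s (p τ * s τ - k₁ * q τ * Real.sign (s τ)) τ)
    {τ₁ τ₂ : ℝ} (h12 : τ₁ ≤ τ₂) (h0 : s τ₁ = 0) (hpos : 0 < s τ₂) : False := by
  set P : ℝ → ℝ := fun t => ∫ u in τ₁..t, p u with hPdef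
  have hP : ∀ τ, HasDerivAt P (p τ) τ := fun τ =>
    intervalIntegral.integral_hasDerivAt_right
      ((hpc.intervalIntegrable _ _))
      ⟨Set.univ, Filter.univ_mem, hpc.aestronglyMeasurable.restrict⟩
      hpc.continuousAt
  have hPc : Continuous P :=
    continuous_iff_continuousAt.2 fun x => (hP x).differentiableAt.continuousAt
  -- the last zero before τ₂
  set A : Set ℝ := Icc τ₁ τ₂ ∩ s ⁻¹' {0} with hAdef
  have hAne : A.Nonempty := ⟨τ₁, ⟨le_rfl, h12⟩, h0⟩
  have hAcl : IsClosed A := isClosed_Icc.inter (isClosed_singleton.preimage hscont)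
  have hAbdd : BddAbove A := (BddAbove.mono inter_subset_left) bddAbove_Icc
  set τs := sSup A with hτs
  have hτsA : τs ∈ A := hAcl.csSup_mem hAne hAbdd
  have hs0 : s τs = 0 := hτsA.2
  have hτslt : τs < τ₂ :=
    lt_of_le_of_ne hτsA.1.2 (fun he => hpos.ne' (he ▸ hs0))
  have hne : ∀ τ ∈ Ioc τs τ₂, s τ ≠ 0 := by
    intro τ hτ hzero
    have : τ ∈ A := ⟨⟨hτsA.1.1.trans hτ.1.le, hτ.2⟩, hzero⟩
    exact absurd (le_csSup hAbdd this) (not_le.2 hτ.1)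
  have hposI : ∀ τ ∈ Ioc τs τ₂, 0 < s τ := by
    intro τ hτ
    rcases lt_trichotomy (s τ) 0 with h | h | h
    · have hmem : (0:ℝ) ∈ Icc (s τ) (s τ₂) := ⟨h.le, hpos.le⟩
      obtain ⟨c, hc, hc0⟩ := intermediate_value_Icc hτ.2 hscont.continuousOn hmem
      exact absurd hc0 (hne c ⟨hτ.1.trans_le hc.1, hc.2⟩)
    · exact absurd h (hne τ hτ)
    · exact h
  -- decay of g on (τs, τ₂]
  have hg : ∀ a ∈ Ioc τs τ₂,
      s τ₂ * Real.exp (-P τ₂) ≤ s a * Real.exp (-P a) := by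
    intro a ha
    have hdiff := aux_gdiff hq hP hode ha.2
      (fun τ hτ => hposI τ ⟨ha.1.trans_le hτ.1, hτ.2⟩)
    have hint : 0 ≤ ∫ τ in a..τ₂, q τ * Real.exp (-P τ) :=
      intervalIntegral.integral_nonneg ha.2
        (fun u _ => mul_nonneg (hqnonneg u) (Real.exp_pos _).le)
    nlinarith [mul_nonneg hk₁.le hint]
  -- take the limit a → τs⁺
  have hgts : Filter.Tendsto (fun a => s a * Real.exp (-P a)) (nhdsWithin τs (Ioi τs))
      (nhds (s τs * Real.exp (-P τs))) :=
    ((hscont.mul (hPc.neg.rexp)).continuousAt).continuousWithinAt.tendsto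
  have hle : s τ₂ * Real.exp (-P τ₂) ≤ s τs * Real.exp (-P τs) := by
    refine ge_of_tendsto hgts ?_
    filter_upwards [Ioc_mem_nhdsGT hτslt] with a ha using hg a ha
  rw [hs0, zero_mul] at hle
  exact absurd hle (not_le.2 (mul_pos hpos (Real.exp_pos _)))

/-- A solution that stays positive forever contradicts the average-decay condition. -/
private lemma aux_escape {T : ℝ} (hT : 0 < T) {p q : ℝ → ℝ} {k₁ : ℝ} {s : ℝ → ℝ}
    (hpc : Continuous p) (hq : Continuous q)
    (hpT : Function.Periodic p T) (hqT : Function.Periodic q T)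
    (hqnonneg : ∀ τ, 0 ≤ q τ) (hqpos : 0 < ∫ τ in (0:ℝ)..T, q τ)
    (hk₁ : 0 < k₁) (hI : (∫ τ in (0:ℝ)..T, p τ) ≤ 0)
    (hode : ∀ τ, s τ ≠ 0 →
      HasDerivAt s (p τ * s τ - k₁ * q τ * Real.sign (s τ)) τ)
    (τ₀ : ℝ) (hpos : ∀ τ, τ₀ ≤ τ → 0 < s τ) : False := by
  set P : ℝ → ℝ := fun t => ∫ u in τ₀..t, p u with hPdef
  have hP : ∀ τ, HasDerivAt P (p τ) τ := fun τ =>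
    intervalIntegral.integral_hasDerivAt_right
      ((hpc.intervalIntegrable _ _))
      ⟨Set.univ, Filter.univ_mem, hpc.aestronglyMeasurable.restrict⟩
      hpc.continuousAt
  -- a global bound on p
  obtain ⟨C, hC⟩ := (isCompact_Icc : IsCompact (Icc (0:ℝ) T)).exists_bound_of_continuousOn
    hpc.continuousOn
  set M : ℝ := max C 0 with hM
  have hM0 : 0 ≤ M := le_max_right _ _
  have hpM : ∀ τ, p τ ≤ M := by
    intro τ
    obtain ⟨y, hy, hxy⟩ := hpT.exists_mem_Ico₀ hT τ
    rw [hxy]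
    calc p y ≤ |p y| := le_abs_self _
      _ ≤ C := hC y ⟨hy.1, hy.2.le⟩
      _ ≤ M := le_max_left _ _
  -- bound on P on each period block
  have hPblock : ∀ n : ℕ, ∀ τ ∈ Icc (τ₀ + n * T) (τ₀ + (n + 1) * T), P τ ≤ M * T := by
    intro n τ hτ
    have hsplit : P τ = (∫ u in τ₀..(τ₀ + n * T), p u) + ∫ u in (τ₀ + n * T)..τ, p u :=
      (intervalIntegral.integral_add_adjacent_intervals
        (hpc.intervalIntegrable _ _) (hpc.intervalIntegrable _ _)).symm
    have hper : (∫ u in τ₀..(τ₀ + n * T), p u) = (n : ℤ) • ∫ u in τ₀..(τ₀ + T), p u := by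
      have := hpT.intervalIntegral_add_zsmul_eq (n : ℤ) τ₀
        (fun t₁ t₂ => hpc.intervalIntegrable _ _)
      simpa [zsmul_eq_mul] using this
    have hper2 : (∫ u in τ₀..(τ₀ + T), p u) = ∫ u in (0:ℝ)..T, p u := by
      simpa using hpT.intervalIntegral_add_eq τ₀ 0
    have h1 : (∫ u in τ₀..(τ₀ + n * T), p u) ≤ 0 := by
      rw [hper, hper2, zsmul_eq_mul]
      exact mul_nonpos_of_nonneg_of_nonpos (by positivity) hI
    have h2 : (∫ u in (τ₀ + n * T)..τ, p u) ≤ M * T := by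
      calc (∫ u in (τ₀ + n * T)..τ, p u) ≤ ∫ _ in (τ₀ + n * T)..τ, M := by
            apply intervalIntegral.integral_mono_on hτ.1
              (hpc.intervalIntegrable _ _) (intervalIntegrable_const)
            exact fun x _ => hpM x
        _ = (τ - (τ₀ + n * T)) * M := by rw [intervalIntegral.integral_const, smul_eq_mul]
        _ ≤ T * M := by
            apply mul_le_mul_of_nonneg_right _ hM0
            have := hτ.2
            nlinarith [hτ.1, hτ.2]
        _ = M * T := mul_comm _ _
    linarith [hsplit ▸ add_le_add h1 h2]
  -- per-period decrement of g
  set g : ℝ → ℝ := fun t => s t * Real.exp (-P t) with hg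
  set c : ℝ := k₁ * (Real.exp (-(M * T)) * ∫ τ in (0:ℝ)..T, q τ) with hc
  have hcpos : 0 < c := by positivity
  have hstep : ∀ n : ℕ, g (τ₀ + (n + 1) * T) ≤ g (τ₀ + n * T) - c := by
    intro n
    have hab : τ₀ + n * T ≤ τ₀ + (n + 1) * T := by nlinarith
    have hposab : ∀ τ ∈ Icc (τ₀ + n * T) (τ₀ + (n + 1) * T), 0 < s τ := by
      intro τ hτ
      exact hpos τ (by nlinarith [hτ.1])
    have hdiff := aux_gdiff hq hP hode hab hposab
    have hlow : Real.exp (-(M * T)) * (∫ τ in (0:ℝ)..T, q τ)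
        ≤ ∫ τ in (τ₀ + n * T)..(τ₀ + (n + 1) * T), q τ * Real.exp (-P τ) := by
      have h1 : (∫ τ in (τ₀ + n * T)..(τ₀ + (n + 1) * T), q τ * Real.exp (-(M * T)))
          ≤ ∫ τ in (τ₀ + n * T)..(τ₀ + (n + 1) * T), q τ * Real.exp (-P τ) := by
        apply intervalIntegral.integral_mono_on hab
          (Continuous.intervalIntegrable (by fun_prop) _ _)
          (Continuous.intervalIntegrable (by
            have hPc : Continuous P := continuous_iff_continuousAt.2
              fun x => (hP x).differentiableAt.continuousAt
            fun_prop) _ _)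
        intro x hx
        apply mul_le_mul_of_nonneg_left _ (hqnonneg x)
        exact Real.exp_le_exp.2 (neg_le_neg (hPblock n x hx))
      have h2 : (∫ τ in (τ₀ + n * T)..(τ₀ + (n + 1) * T), q τ * Real.exp (-(M * T)))
          = Real.exp (-(M * T)) * ∫ τ in (0:ℝ)..T, q τ := by
        rw [intervalIntegral.integral_mul_const]
        have hq2 : (∫ τ in (τ₀ + n * T)..(τ₀ + n * T + T), q τ) = ∫ τ in (0:ℝ)..T, q τ := by
          simpa using hqT.intervalIntegral_add_eq (τ₀ + n * T) 0
        rw [show τ₀ + (n + 1) * T = τ₀ + n * T + T by ring, hq2, mul_comm]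
      linarith [h2 ▸ h1]
    have : g (τ₀ + (n + 1) * T) - g (τ₀ + n * T)
        ≤ -(k₁ * (Real.exp (-(M * T)) * ∫ τ in (0:ℝ)..T, q τ)) := by
      rw [hdiff]
      have := mul_le_mul_of_nonneg_left hlow hk₁.le
      linarith
    simpa [hc] using by linarith
  -- iterate
  have hiter : ∀ n : ℕ, g (τ₀ + n * T) ≤ g τ₀ - n * c := by
    intro n
    induction n with
    | zero => simp
    | succ m ih =>
      have := hstep m
      push_cast
      push_cast at ih this
      linarith
  obtain ⟨n, hn⟩ := exists_nat_gt (g τ₀ / c)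
  have h1 : g τ₀ < n * c := (div_lt_iff₀ hcpos).1 hn
  have h2 : 0 < g (τ₀ + n * T) :=
    mul_pos (hpos _ (le_add_of_nonneg_right (by positivity))) (Real.exp_pos _)
  linarith [hiter n]


/-- Sliding dynamics `s' = p s − k₁ q sign(s)` with `p = ptilde − k₂ q`:
every (Filippov) solution reaches `0` in finite time and stays there.
A Filippov solution is formalized as a continuous function satisfying the
ODE at every point where `s ≠ 0` (away from the discontinuity surface). -/
theorem stmt_12 (T : ℝ) (hT : 0 < T)
    (ptilde q : ℝ → ℝ) (hptilde : Continuous ptilde) (hq : Continuous q)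
    (hptildeT : ∀ τ, ptilde (τ + T) = ptilde τ) (hqT : ∀ τ, q (τ + T) = q τ)
    (hqnonneg : ∀ τ, 0 ≤ q τ) (hqpos : 0 < ∫ τ in (0:ℝ)..T, q τ)
    (k₁ k₂ : ℝ) (hk₁ : 0 < k₁)
    (hk₂ : 0 < ∫ τ in (0:ℝ)..T, (k₂ * q τ - ptilde τ))
    (p : ℝ → ℝ) (hp : ∀ τ, p τ = ptilde τ - k₂ * q τ)
    (s : ℝ → ℝ) (τ₀ s₀ : ℝ) (hs₀ : s τ₀ = s₀)
    (hscont : Continuous s)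
    (hode : ∀ τ, s τ ≠ 0 →
      HasDerivAt s (p τ * s τ - k₁ * q τ * Real.sign (s τ)) τ) :
    ∃ τᵣ : ℝ, τ₀ ≤ τᵣ ∧ ∀ τ, τᵣ ≤ τ → s τ = 0 := by
  have hpf : p = fun τ => ptilde τ - k₂ * q τ := funext hp
  have hpc : Continuous p := by rw [hpf]; fun_prop
  have hpT : Function.Periodic p T := by
    intro τ; rw [hp, hp, hptildeT, hqT]
  have hqT' : Function.Periodic q T := hqT
  have hI : (∫ τ in (0:ℝ)..T, p τ) ≤ 0 := by
    have heq : (∫ τ in (0:ℝ)..T, p τ) = -∫ τ in (0:ℝ)..T, (k₂ * q τ - ptilde τ) := by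
      rw [← intervalIntegral.integral_neg]
      apply intervalIntegral.integral_congr
      intro x _; rw [hp]; ring
    rw [heq]; linarith
  -- negated system
  have hode' : ∀ τ, (fun t => -s t) τ ≠ 0 →
      HasDerivAt (fun t => -s t)
        (p τ * (fun t => -s t) τ - k₁ * q τ * Real.sign ((fun t => -s t) τ)) τ := by
    intro τ h
    have h2 : s τ ≠ 0 := fun hh => h (by simp [hh])
    have := (hode τ h2).neg
    refine this.congr_deriv ?_
    simp only [Real.sign_neg]
    ring
  by_cases hzero : ∃ τᵣ, τ₀ ≤ τᵣ ∧ s τᵣ = 0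
  · obtain ⟨τᵣ, hτᵣ, hτᵣ0⟩ := hzero
    refine ⟨τᵣ, hτᵣ, fun τ hτ => ?_⟩
    by_contra hne
    rcases lt_or_gt_of_ne hne with h | h
    · exact aux_stay hpc hq hqnonneg hk₁ hscont.neg hode' hτ (by simp [hτᵣ0])
        (by simpa using neg_pos.2 h)
    · exact aux_stay hpc hq hqnonneg hk₁ hscont hode hτ hτᵣ0 h
  · push_neg at hzero
    exfalso
    have hne : ∀ τ, τ₀ ≤ τ → s τ ≠ 0 := hzero
    rcases lt_trichotomy (s τ₀) 0 with h | h | h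
    · -- s stays negative, apply escape lemma to -s
      have hpos : ∀ τ, τ₀ ≤ τ → 0 < -s τ := by
        intro τ hτ
        rcases lt_trichotomy (s τ) 0 with h' | h' | h'
        · linarith
        · exact absurd h' (hne τ hτ)
        · exfalso
          have hmem : (0:ℝ) ∈ Icc (s τ₀) (s τ) := ⟨h.le, h'.le⟩
          obtain ⟨c, hc, hc0⟩ := intermediate_value_Icc hτ hscont.continuousOn hmem
          exact hne c hc.1 hc0
      exact aux_escape hT hpc hq hpT hqT' hqnonneg hqpos hk₁ hI hode' τ₀ hpos
    · exact hne τ₀ le_rfl h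
    · have hpos : ∀ τ, τ₀ ≤ τ → 0 < s τ := by
        intro τ hτ
        rcases lt_trichotomy (s τ) 0 with h' | h' | h'
        · exfalso
          have hmem : (0:ℝ) ∈ Icc (s τ) (s τ₀) := ⟨h'.le, h.le⟩
          obtain ⟨c, hc, hc0⟩ := intermediate_value_Icc' hτ hscont.continuousOn hmem
          exact hne c hc.1 hc0
        · exact absurd h' (hne τ hτ)
        · exact h'
      exact aux_escape hT hpc hq hpT hqT' hqnonneg hqpos hk₁ hI hode τ₀ hpos
end

section
/- Let Ψ ∈ ℝ^{3×3} be nondefective (diagonalizable over ℂ), J ∈ ℝ^{2×3} with rank J = 2, P ∈ ℝ^{2×2} symmetric positive definite, and α, T > 0. Suppose ξᵀ Ψᵀ Jᵀ P J Ψ ξ ≤ e^{−αT} ξᵀ Jᵀ P J ξ for all ξ ∈ ℝ³. Then Ψ has at least two eigenvalues (counted with multiplicity) of modulus strictly less than 1. -/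
open Matrix Polynomial

lemma aux_quad (M : Matrix (Fin 3) (Fin 3) ℝ) (x y : Fin 3 → ℝ) (a b : ℝ) :
    (a • x - b • y) ⬝ᵥ M *ᵥ (a • x - b • y) + (b • x + a • y) ⬝ᵥ M *ᵥ (b • x + a • y)
      = (a ^ 2 + b ^ 2) * (x ⬝ᵥ M *ᵥ x + y ⬝ᵥ M *ᵥ y) := by
  simp only [mulVec_add, mulVec_sub, mulVec_smul, dotProduct_add, dotProduct_sub,
    add_dotProduct, sub_dotProduct, dotProduct_smul, smul_dotProduct, smul_eq_mul]
  ring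

lemma aux_pd (J : Matrix (Fin 2) (Fin 3) ℝ) (P : Matrix (Fin 2) (Fin 2) ℝ)
    (ξ : Fin 3 → ℝ) : ξ ⬝ᵥ (Jᵀ * P * J) *ᵥ ξ = (J *ᵥ ξ) ⬝ᵥ P *ᵥ (J *ᵥ ξ) := by
  rw [Matrix.mul_assoc, ← mulVec_mulVec, dotProduct_mulVec, vecMul_transpose, ← mulVec_mulVec]

lemma aux_nonneg (J : Matrix (Fin 2) (Fin 3) ℝ) (P : Matrix (Fin 2) (Fin 2) ℝ) (hP : P.PosDef)
    (ξ : Fin 3 → ℝ) : 0 ≤ ξ ⬝ᵥ (Jᵀ * P * J) *ᵥ ξ := by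
  rw [aux_pd]
  have := hP.posSemidef.dotProduct_mulVec_nonneg (J *ᵥ ξ)
  simpa using this

lemma aux_zero (J : Matrix (Fin 2) (Fin 3) ℝ) (P : Matrix (Fin 2) (Fin 2) ℝ) (hP : P.PosDef)
    (ξ : Fin 3 → ℝ) (h : ξ ⬝ᵥ (Jᵀ * P * J) *ᵥ ξ ≤ 0) : J *ᵥ ξ = 0 := by
  by_contra hne
  have h2 := hP.dotProduct_mulVec_pos hne
  rw [star_trivial] at h2
  rw [aux_pd] at h
  linarith

lemma aux_roots (μ : Fin 3 → ℂ) :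
    (Matrix.diagonal μ).charpoly.roots = Finset.univ.val.map μ := by
  have h : (Matrix.diagonal μ).charpoly = ∏ i, (X - C (μ i)) := by
    rw [Matrix.charpoly, charmatrix]
    rw [show C.mapMatrix (Matrix.diagonal μ) = Matrix.diagonal (fun i => C (μ i)) from
      Matrix.diagonal_map (map_zero C)]
    rw [show (Matrix.scalar (Fin 3)) X = Matrix.diagonal (fun _ => X) by
      ext i j; simp [Matrix.scalar_apply, Matrix.diagonal_apply]]
    rw [Matrix.diagonal_sub, Matrix.det_diagonal]
  rw [h, Finset.prod_eq_multiset_prod]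
  rw [show Multiset.map (fun i => X - C (μ i)) Finset.univ.val
      = Multiset.map (fun a => X - C a) (Multiset.map μ Finset.univ.val) by
    rw [Multiset.map_map]; rfl]
  exact roots_multiset_prod_X_sub_C _

lemma aux_charpoly (Ψc : Matrix (Fin 3) (Fin 3) ℂ) (b : Module.Basis (Fin 3) ℂ (Fin 3 → ℂ)) (μ : Fin 3 → ℂ)
    (hb : ∀ i, Ψc.mulVec (b i) = μ i • b i) :
    Ψc.charpoly = (Matrix.diagonal μ).charpoly := by
  have h1 : LinearMap.toMatrix b b Ψc.mulVecLin = Matrix.diagonal μ := by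
    funext i j
    rw [LinearMap.toMatrix_apply]
    simp only [Matrix.mulVecLin_apply, hb j, _root_.map_smul, Module.Basis.repr_self]
    simp only [Matrix.diagonal, Finsupp.smul_single, smul_eq_mul, mul_one, Finsupp.single_apply, of_apply]
    by_cases h : i = j
    · subst h; simp
    · simp only [if_neg h, if_neg (fun hji : j = i => h hji.symm)]
  have h2 : Ψc = LinearMap.toMatrix (Pi.basisFun ℂ (Fin 3)) (Pi.basisFun ℂ (Fin 3)) Ψc.mulVecLin := by
    rw [LinearMap.toMatrix_eq_toMatrix', ← Matrix.toLin'_apply']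
    simp
  conv_lhs => rw [h2]
  rw [LinearMap.charpoly_toMatrix, ← LinearMap.charpoly_toMatrix Ψc.mulVecLin b, h1]

theorem stmt_13 (Ψ : Matrix (Fin 3) (Fin 3) ℝ)
    (hdiag : ∃ b : Module.Basis (Fin 3) ℂ (Fin 3 → ℂ),
      ∀ i, ∃ μ : ℂ, (Ψ.map (Complex.ofReal)).mulVec (b i) = μ • b i)
    (J : Matrix (Fin 2) (Fin 3) ℝ) (hJ : J.rank = 2)
    (P : Matrix (Fin 2) (Fin 2) ℝ) (hP : P.PosDef) (hPsymm : Pᵀ = P)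
    (α T : ℝ) (hα : 0 < α) (hT : 0 < T)
    (hineq : ∀ ξ : Fin 3 → ℝ,
      (Ψ.mulVec ξ) ⬝ᵥ ((Jᵀ * P * J).mulVec (Ψ.mulVec ξ))
        ≤ Real.exp (-α * T) * (ξ ⬝ᵥ ((Jᵀ * P * J).mulVec ξ))) :
    2 ≤ Multiset.card
      (((Ψ.map (Complex.ofReal)).charpoly.roots).filter (fun μ => ‖μ‖ < 1)) := by
  obtain ⟨b, hb⟩ := hdiag
  choose μ hμ using hb
  -- kernel of J is a line
  obtain ⟨w, hw⟩ : ∃ w : Fin 3 → ℝ, LinearMap.ker J.mulVecLin = Submodule.span ℝ {w} := by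
    have h1 := LinearMap.finrank_range_add_finrank_ker J.mulVecLin
    rw [Matrix.rank] at hJ
    rw [hJ] at h1
    simp only [Module.finrank_pi, Fintype.card_fin] at h1
    have h2 : Module.finrank ℝ (LinearMap.ker J.mulVecLin) ≤ 1 := by omega
    obtain ⟨w, hww⟩ := (Submodule.finrank_le_one_iff_isPrincipal (LinearMap.ker J.mulVecLin)).mp h2
    exact ⟨w, hww⟩
  -- key: bad eigenvalues force eigenvector to be a complex multiple of w
  have key : ∀ i, ¬ (‖μ i‖ < 1) →
      ∃ lam : ℂ, lam ≠ 0 ∧ b i = lam • (fun k => (w k : ℂ)) := by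
    intro i hbad
    set x : Fin 3 → ℝ := fun k => ((b i : Fin 3 → ℂ) k).re with hxdef
    set y : Fin 3 → ℝ := fun k => ((b i : Fin 3 → ℂ) k).im with hydef
    set a : ℝ := (μ i).re
    set c : ℝ := (μ i).im
    have hx : Ψ *ᵥ x = a • x - c • y := by
      funext k
      have h := congrArg Complex.re (congrFun (hμ i) k)
      simp only [mulVec, dotProduct, map_apply, Pi.smul_apply, smul_eq_mul, Complex.re_sum,
        Complex.mul_re, Complex.ofReal_re, Complex.ofReal_im, zero_mul, sub_zero] at h
      simpa [mulVec, dotProduct, hxdef, hydef] using h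
    have hy : Ψ *ᵥ y = c • x + a • y := by
      funext k
      have h := congrArg Complex.im (congrFun (hμ i) k)
      simp only [mulVec, dotProduct, map_apply, Pi.smul_apply, smul_eq_mul, Complex.im_sum,
        Complex.mul_im, Complex.ofReal_re, Complex.ofReal_im, zero_mul, add_zero] at h
      simp only [mulVec, dotProduct, Pi.add_apply, Pi.smul_apply, smul_eq_mul, hxdef, hydef]
      rw [h]; ring
    have hqx := hineq x
    have hqy := hineq y
    rw [hx] at hqx
    rw [hy] at hqy
    have hquad := aux_quad (Jᵀ * P * J) x y a c
    have habs : 1 ≤ a ^ 2 + c ^ 2 := by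
      have h1 : 1 ≤ ‖μ i‖ := le_of_not_gt hbad
      have h2 := Complex.sq_norm (μ i)
      have h3 := Complex.normSq_apply (μ i)
      nlinarith [norm_nonneg (μ i)]
    have he : Real.exp (-α * T) < 1 := by
      rw [Real.exp_lt_one_iff]
      nlinarith
    have hnx := aux_nonneg J P hP x
    have hny := aux_nonneg J P hP y
    have hQ0 : x ⬝ᵥ (Jᵀ * P * J) *ᵥ x + y ⬝ᵥ (Jᵀ * P * J) *ᵥ y ≤ 0 := by
      nlinarith
    have hJx : J *ᵥ x = 0 := aux_zero J P hP x (by linarith)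
    have hJy : J *ᵥ y = 0 := aux_zero J P hP y (by linarith)
    obtain ⟨s, hs⟩ := Submodule.mem_span_singleton.mp
      (hw ▸ (LinearMap.mem_ker.mpr (by rw [Matrix.mulVecLin_apply]; exact hJx)))
    obtain ⟨t, ht⟩ := Submodule.mem_span_singleton.mp
      (hw ▸ (LinearMap.mem_ker.mpr (by rw [Matrix.mulVecLin_apply]; exact hJy)))
    refine ⟨⟨s, t⟩, ?_, ?_⟩
    · intro h0
      apply b.ne_zero i
      have hs0 : s = 0 := by simpa using congrArg Complex.re h0
      have ht0 : t = 0 := by simpa using congrArg Complex.im h0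
      funext k
      apply Complex.ext
      · have := congrFun hs k
        simp only [Pi.smul_apply, smul_eq_mul, hs0, zero_mul] at this
        simpa [hxdef] using this.symm
      · have := congrFun ht k
        simp only [Pi.smul_apply, smul_eq_mul, ht0, zero_mul] at this
        simpa [hydef] using this.symm
    · funext k
      apply Complex.ext
      · have := congrFun hs k
        simp only [Pi.smul_apply, smul_eq_mul] at this ⊢
        simp only [Complex.mul_re, Complex.ofReal_re, Complex.ofReal_im, mul_zero, sub_zero]
        exact this.symm
      · have := congrFun ht k
        simp only [Pi.smul_apply, smul_eq_mul] at this ⊢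
        simp only [Complex.mul_im, Complex.ofReal_re, Complex.ofReal_im, mul_zero, zero_mul,
          add_zero, zero_add]
        exact this.symm
  -- at most one bad index
  have hcard : (Finset.univ.filter fun i => ¬ (‖μ i‖ < 1)).card ≤ 1 := by
    rw [Finset.card_le_one]
    intro i hi j hj
    by_contra hne
    obtain ⟨li, hli0, hli⟩ := key i (by simpa using hi)
    obtain ⟨lj, hlj0, hlj⟩ := key j (by simpa using hj)
    have hinj : Function.Injective ![i, j] := by
      intro p q hpq
      fin_cases p <;> fin_cases q <;> simp_all
    have hpair : LinearIndependent ℂ ![b i, b j] := by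
      have := b.linearIndependent.comp ![i, j] hinj
      convert this using 1
      funext p; fin_cases p <;> rfl
    rw [LinearIndependent.pair_iff] at hpair
    have hrel : lj • b i + (-li) • b j = 0 := by
      rw [hli, hlj, smul_smul, smul_smul]
      rw [show lj * li = -(-li * lj) by ring]
      rw [neg_smul, neg_add_cancel]
    exact hlj0 (hpair lj (-li) hrel).1
  -- finish the count
  have hroots : (Ψ.map Complex.ofReal).charpoly.roots = Finset.univ.val.map μ := by
    rw [aux_charpoly _ b μ hμ, aux_roots]
  rw [hroots, Multiset.filter_map]
  rw [Multiset.card_map]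
  have htot := Finset.card_filter_add_card_filter_not
    (s := (Finset.univ : Finset (Fin 3))) (p := fun i => ‖μ i‖ < 1)
  simp only [Finset.card_univ, Fintype.card_fin] at htot
  have : Multiset.card (Multiset.filter ((fun c => ‖c‖ < 1) ∘ μ) Finset.univ.val)
      = (Finset.univ.filter fun i => ‖μ i‖ < 1).card := rfl
  rw [this]
  omega
end
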